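/- If T' is a strong tournament and pq(T') is obtained from T' by adding vertices p and q with arcs q→p, p→t and t→q for every vertex t of T', then pq(T') is strong and f(pq(T')) = 2·f(T') + 1, where f denotes the number of minimal feedback vertex sets. -/

import Mathlib

/-- A set `W` of vertices is acyclic if the digraph `r` restricted to `W`
has no directed cycle (the transitive closure restricted to `W` is irreflexive). -/
def AcyclicOn {V : Type*} (r : V → V → Prop) (W : Set V) : Prop :=
  ∀ v : V, ¬ Relation.TransGen (fun a b => a ∈ W ∧ b ∈ W ∧ r a b) v v

/-- A tournament: an irreflexive relation with exactly one arc between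
every pair of distinct vertices. -/
def IsTournament {V : Type*} (r : V → V → Prop) : Prop :=
  (∀ v : V, ¬ r v v) ∧ ∀ u v : V, u ≠ v → (r u v ↔ ¬ r v u)

/-- A feedback vertex set: its deletion leaves an acyclic digraph. -/
def IsFVS {V : Type*} (r : V → V → Prop) (F : Set V) : Prop :=
  AcyclicOn r Fᶜ

/-- A minimal feedback vertex set. -/
def IsMinimalFVS {V : Type*} (r : V → V → Prop) (F : Set V) : Prop :=
  IsFVS r F ∧ ∀ F' : Set V, F' ⊆ F → IsFVS r F' → F' = F

/-- A feedback vertex set of the subtournament induced on `S`. -/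
def IsFVSOn {V : Type*} (r : V → V → Prop) (S F : Set V) : Prop :=
  F ⊆ S ∧ AcyclicOn r (S \ F)

/-- A minimal feedback vertex set of the subtournament induced on `S`. -/
def IsMinimalFVSOn {V : Type*} (r : V → V → Prop) (S F : Set V) : Prop :=
  IsFVSOn r S F ∧ ∀ F' : Set V, F' ⊆ F → IsFVSOn r S F' → F' = F

/-- Strong (strongly connected): a directed path between any ordered pair. -/
def IsStrong {V : Type*} (r : V → V → Prop) : Prop :=
  ∀ u v : V, Relation.ReflTransGen r u v

/-- The subtournament induced on `S` is strong. -/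
def IsStrongOn {V : Type*} (r : V → V → Prop) (S : Set V) : Prop :=
  ∀ u ∈ S, ∀ v ∈ S, Relation.ReflTransGen (fun a b => a ∈ S ∧ b ∈ S ∧ r a b) u v

/-- The score (out-degree) of a vertex. -/
noncomputable def outScore {V : Type*} (r : V → V → Prop) (v : V) : ℕ :=
  {u : V | r v u}.ncard

/-- The number of minimal feedback vertex sets of a tournament. -/
noncomputable def fvsCount (V : Type*) (r : V → V → Prop) : ℕ :=
  {F : Set V | IsMinimalFVS r F}.ncard

/-- `maxMinFVS n` = maximum number of minimal FVSs over all `n`-vertex tournaments. -/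
noncomputable def maxMinFVS (n : ℕ) : ℕ :=
  sSup {k : ℕ | ∃ r : Fin n → Fin n → Prop, IsTournament r ∧ fvsCount (Fin n) r = k}


/-- The tournament `pq(T')`: add vertices `p = inr false` and `q = inr true`
to `T'` with arcs `q → p`, `p → t` and `t → q` for every vertex `t` of `T'`. -/
def pqRel {V : Type*} (r : V → V → Prop) : V ⊕ Bool → V ⊕ Bool → Prop
  | Sum.inl t, Sum.inl t' => r t t'
  | Sum.inr true, Sum.inr false => True
  | Sum.inr false, Sum.inl _ => True
  | Sum.inl _, Sum.inr true => True
  | _, _ => False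


section Aux

variable {α : Type*}

lemma tg_first_step {r' : α → α → Prop} {x y : α}
    (h : Relation.TransGen r' x y) : ∃ c, r' x c := by
  induction h with
  | single h => exact ⟨_, h⟩
  | tail _ _ ih => exact ih

lemma tg_mem_left {r' : α → α → Prop} {S : Set α} {x y : α}
    (h : Relation.TransGen (fun a b => a ∈ S ∧ b ∈ S ∧ r' a b) x y) : x ∈ S := by
  induction h with
  | single h => exact h.1
  | tail _ _ ih => exact ih

lemma acyclicOn_mono {r' : α → α → Prop} {S S' : Set α}
    (h : AcyclicOn r' S) (hsub : S' ⊆ S) : AcyclicOn r' S' := fun v hv =>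
  h v (Relation.TransGen.mono (fun a b hab => ⟨hsub hab.1, hsub hab.2.1, hab.2.2⟩) _ _ hv)

lemma acyclic_insert_sink {r' : α → α → Prop} {S : Set α} {w : α}
    (hw : ∀ b ∈ insert w S, ¬ r' w b)
    (h : AcyclicOn r' S) : AcyclicOn r' (insert w S) := by
  have key : ∀ x y, Relation.TransGen (fun a b => a ∈ insert w S ∧ b ∈ insert w S ∧ r' a b) x y →
      y ≠ w → x ≠ w ∧ Relation.TransGen (fun a b => a ∈ S ∧ b ∈ S ∧ r' a b) x y := by
    intro x y hxy
    induction hxy with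
    | single hstep =>
      intro hy
      have hx : x ≠ w := fun hxw => hw _ hstep.2.1 (hxw ▸ hstep.2.2)
      exact ⟨hx, .single ⟨(Set.mem_insert_iff.1 hstep.1).resolve_left hx,
        (Set.mem_insert_iff.1 hstep.2.1).resolve_left hy, hstep.2.2⟩⟩
    | @tail b c hxb hstep ih =>
      intro hy
      have hb : b ≠ w := fun hbw => hw _ hstep.2.1 (hbw ▸ hstep.2.2)
      obtain ⟨hx, htg⟩ := ih hb
      exact ⟨hx, htg.tail ⟨(Set.mem_insert_iff.1 hstep.1).resolve_left hb,
        (Set.mem_insert_iff.1 hstep.2.1).resolve_left hy, hstep.2.2⟩⟩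
  intro v hv
  by_cases hvw : v = w
  · subst hvw
    obtain ⟨c, hc⟩ := tg_first_step hv
    exact hw _ hc.2.1 hc.2.2
  · exact h v (key v v hv hvw).2

lemma acyclic_insert_source {r' : α → α → Prop} {S : Set α} {w : α}
    (hw : ∀ a ∈ insert w S, ¬ r' a w)
    (h : AcyclicOn r' S) : AcyclicOn r' (insert w S) := by
  have key : ∀ x y, Relation.TransGen (fun a b => a ∈ insert w S ∧ b ∈ insert w S ∧ r' a b) x y →
      x ≠ w → y ≠ w ∧ Relation.TransGen (fun a b => a ∈ S ∧ b ∈ S ∧ r' a b) x y := by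
    intro x y hxy
    induction hxy with
    | @single y' hstep =>
      intro hx
      have hy : y' ≠ w := fun hyw => hw _ hstep.1 (hyw ▸ hstep.2.2)
      exact ⟨hy, .single ⟨(Set.mem_insert_iff.1 hstep.1).resolve_left hx,
        (Set.mem_insert_iff.1 hstep.2.1).resolve_left hy, hstep.2.2⟩⟩
    | @tail b c hxb hstep ih =>
      intro hx
      obtain ⟨hb, htg⟩ := ih hx
      have hy : c ≠ w := fun hyw => hw _ hstep.1 (hyw ▸ hstep.2.2)
      exact ⟨hy, htg.tail ⟨(Set.mem_insert_iff.1 hstep.1).resolve_left hb,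
        (Set.mem_insert_iff.1 hstep.2.1).resolve_left hy, hstep.2.2⟩⟩
  intro v hv
  by_cases hvw : v = w
  · subst hvw
    cases hv with
    | single h1 => exact hw _ h1.1 h1.2.2
    | tail _ h1 => exact hw _ h1.1 h1.2.2
  · exact h v (key v v hv hvw).2

end Aux

section PQ

variable {V : Type*} {r : V → V → Prop}

lemma pqRel_inl_inl {a b : V} : pqRel r (Sum.inl a) (Sum.inl b) ↔ r a b := Iff.rfl

lemma tg_inl_down {W : Set V} : ∀ {x y : V ⊕ Bool},
    Relation.TransGen (fun a b => a ∈ Sum.inl '' W ∧ b ∈ Sum.inl '' W ∧ pqRel r a b) x y →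
    ∀ {a b : V}, x = Sum.inl a → y = Sum.inl b →
      Relation.TransGen (fun a b => a ∈ W ∧ b ∈ W ∧ r a b) a b := by
  intro x y h
  induction h with
  | single hstep =>
    rintro a b rfl rfl
    exact .single ⟨Sum.inl_injective.mem_set_image.1 hstep.1,
      Sum.inl_injective.mem_set_image.1 hstep.2.1, hstep.2.2⟩
  | @tail c y' hxc hstep ih =>
    rintro a b rfl rfl
    obtain ⟨c', hc', rfl⟩ := hstep.1
    exact (ih rfl rfl).tail ⟨hc', Sum.inl_injective.mem_set_image.1 hstep.2.1, hstep.2.2⟩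

lemma acyclic_inl_iff {W : Set V} :
    AcyclicOn (pqRel r) (Sum.inl '' W) ↔ AcyclicOn r W := by
  constructor
  · intro h v hv
    exact h (Sum.inl v) (Relation.TransGen.lift Sum.inl
      (fun a b hab => ⟨Set.mem_image_of_mem _ hab.1, Set.mem_image_of_mem _ hab.2.1, hab.2.2⟩) _ _ hv)
  · intro h x hx
    obtain ⟨a, _, rfl⟩ := tg_mem_left hx
    exact h a (tg_inl_down hx rfl rfl)

end PQ
section PQ2

variable {V : Type*} {r : V → V → Prop}

lemma q_notmem_inl (W : Set V) : (Sum.inr true : V ⊕ Bool) ∉ Sum.inl '' W := by simp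
lemma p_notmem_inl (W : Set V) : (Sum.inr false : V ⊕ Bool) ∉ Sum.inl '' W := by simp

lemma compl_union_p (F₀ : Set V) :
    ((Sum.inl '' F₀ ∪ {Sum.inr false} : Set (V ⊕ Bool)))ᶜ
      = insert (Sum.inr true) (Sum.inl '' F₀ᶜ) := by
  ext x
  cases x with
  | inl a => simp
  | inr b => cases b <;> simp

lemma compl_union_q (F₀ : Set V) :
    ((Sum.inl '' F₀ ∪ {Sum.inr true} : Set (V ⊕ Bool)))ᶜ
      = insert (Sum.inr false) (Sum.inl '' F₀ᶜ) := by
  ext x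
  cases x with
  | inl a => simp
  | inr b => cases b <;> simp

lemma no_out_q {W : Set V} :
    ∀ b ∈ insert (Sum.inr true) (Sum.inl '' W), ¬ pqRel r (Sum.inr true) b := by
  rintro b hb hqb
  cases b with
  | inl t => exact hqb
  | inr c =>
    cases c with
    | false =>
      rcases hb with h | h
      · exact Bool.noConfusion (Sum.inr.inj h)
      · exact p_notmem_inl _ h
    | true => exact hqb

lemma no_in_p {W : Set V} :
    ∀ a ∈ insert (Sum.inr false) (Sum.inl '' W), ¬ pqRel r a (Sum.inr false) := by
  rintro a ha hap
  cases a with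
  | inl t => exact hap
  | inr c =>
    cases c with
    | false => exact hap
    | true =>
      rcases ha with h | h
      · exact Bool.noConfusion (Sum.inr.inj h)
      · exact q_notmem_inl _ h

/-- `IsFVS` transfer for `F₀ ∪ {p}`. -/
lemma fvs_p_iff {F₀ : Set V} :
    IsFVS (pqRel r) (Sum.inl '' F₀ ∪ {Sum.inr false}) ↔ IsFVS r F₀ := by
  unfold IsFVS
  rw [compl_union_p]
  constructor
  · intro h
    exact acyclic_inl_iff.1 (acyclicOn_mono h (Set.subset_insert _ _))
  · intro h
    exact acyclic_insert_sink no_out_q (acyclic_inl_iff.2 h)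

lemma fvs_q_iff {F₀ : Set V} :
    IsFVS (pqRel r) (Sum.inl '' F₀ ∪ {Sum.inr true}) ↔ IsFVS r F₀ := by
  unfold IsFVS
  rw [compl_union_q]
  constructor
  · intro h
    exact acyclic_inl_iff.1 (acyclicOn_mono h (Set.subset_insert _ _))
  · intro h
    exact acyclic_insert_source no_in_p (acyclic_inl_iff.2 h)

/-- if p,q ∉ F and some inl t ∉ F then not an FVS (the 3-cycle p → t → q → p). -/
lemma univ_sub_of_fvs {F : Set (V ⊕ Bool)} (hF : IsFVS (pqRel r) F)
    (hp : Sum.inr false ∉ F) (hq : Sum.inr true ∉ F) :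
    Sum.inl '' (Set.univ : Set V) ⊆ F := by
  rintro x ⟨t, -, rfl⟩
  by_contra ht
  have hp' : (Sum.inr false : V ⊕ Bool) ∈ Fᶜ := hp
  have hq' : (Sum.inr true : V ⊕ Bool) ∈ Fᶜ := hq
  have ht' : (Sum.inl t : V ⊕ Bool) ∈ Fᶜ := ht
  exact hF (Sum.inr false)
    (Relation.TransGen.tail (Relation.TransGen.tail
      (Relation.TransGen.single ⟨hp', ht', trivial⟩) ⟨ht', hq', trivial⟩) ⟨hq', hp', trivial⟩)

lemma minfvs_univ : IsMinimalFVS (pqRel r) (Sum.inl '' (Set.univ : Set V)) := by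
  constructor
  · intro v hv
    have key : ∀ x y : V ⊕ Bool,
        Relation.TransGen (fun a b => a ∈ (Sum.inl '' (Set.univ : Set V))ᶜ ∧
          b ∈ (Sum.inl '' (Set.univ : Set V))ᶜ ∧ pqRel r a b) x y →
        x = Sum.inr true ∧ y = Sum.inr false := by
      intro x y h
      induction h with
      | @single y' hstep =>
        obtain ⟨h1, h2, h3⟩ := hstep
        cases x with
        | inl a => exact absurd (Set.mem_image_of_mem _ (Set.mem_univ a)) h1
        | inr c =>
          cases y' with
          | inl a => exact absurd (Set.mem_image_of_mem _ (Set.mem_univ a)) h2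
          | inr d =>
            cases c <;> cases d <;> first | exact h3.elim | exact ⟨rfl, rfl⟩
      | @tail b c hxb hstep ih =>
        obtain ⟨h1, h2, h3⟩ := hstep
        obtain ⟨hx, hb⟩ := ih
        subst hb
        cases c with
        | inl a => exact absurd (Set.mem_image_of_mem _ (Set.mem_univ a)) h2
        | inr d => cases d <;> exact h3.elim
    obtain ⟨h1, h2⟩ := key v v hv
    rw [h1] at h2
    exact Bool.noConfusion (Sum.inr.inj h2)
  · intro F' hsub hF'
    have hp : Sum.inr false ∉ F' := fun h => p_notmem_inl _ (hsub h)
    have hq : Sum.inr true ∉ F' := fun h => q_notmem_inl _ (hsub h)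
    exact le_antisymm hsub (univ_sub_of_fvs hF' hp hq)

end PQ2
section PQ3

variable {V : Type*} {r : V → V → Prop}

/-- cancellation -/
lemma inl_union_cancel {A B : Set V} {c : V ⊕ Bool} (hc : ∀ x : V, Sum.inl x ≠ c)
    (h : (Sum.inl '' A ∪ {c} : Set (V ⊕ Bool)) = Sum.inl '' B ∪ {c}) : A = B := by
  ext a
  constructor
  · intro ha
    have : (Sum.inl a : V ⊕ Bool) ∈ Sum.inl '' B ∪ {c} := h ▸ Or.inl (Set.mem_image_of_mem _ ha)
    rcases this with h' | h'
    · exact Sum.inl_injective.mem_set_image.1 h'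
    · exact absurd h' (hc a)
  · intro ha
    have : (Sum.inl a : V ⊕ Bool) ∈ Sum.inl '' A ∪ {c} := h ▸ Or.inl (Set.mem_image_of_mem _ ha)
    rcases this with h' | h'
    · exact Sum.inl_injective.mem_set_image.1 h'
    · exact absurd h' (hc a)

lemma minfvs_ne_univ [Nonempty V] (hirr : ∀ v : V, ¬ r v v) {F₀ : Set V}
    (h : IsMinimalFVS r F₀) : F₀ ≠ Set.univ := by
  intro heq
  obtain ⟨v⟩ := ‹Nonempty V›
  have hfvs : IsFVS r ({v}ᶜ : Set V) := by
    intro u hu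
    obtain ⟨c, hc⟩ := tg_first_step hu
    have h1 : u ∈ ({v}ᶜ : Set V)ᶜ := hc.1
    have h2 : c ∈ ({v}ᶜ : Set V)ᶜ := hc.2.1
    rw [compl_compl] at h1 h2
    rw [Set.mem_singleton_iff] at h1 h2
    subst h1; subst h2
    exact hirr _ hc.2.2
  have := h.2 {v}ᶜ (heq ▸ Set.subset_univ _) hfvs
  have hv : v ∈ ({v}ᶜ : Set V) := this ▸ heq ▸ Set.mem_univ v
  exact hv rfl

lemma minfvs_p_of_minfvs [Nonempty V] (hirr : ∀ v : V, ¬ r v v) {F₀ : Set V}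
    (h : IsMinimalFVS r F₀) :
    IsMinimalFVS (pqRel r) (Sum.inl '' F₀ ∪ {Sum.inr false}) := by
  refine ⟨fvs_p_iff.2 h.1, ?_⟩
  intro F' hsub hF'
  by_cases hp : Sum.inr false ∈ F'
  · -- F' = inl '' F₁ ∪ {p}
    set F₁ : Set V := Sum.inl ⁻¹' F' with hF₁
    have hq : Sum.inr true ∉ F' := fun h' => by
      rcases hsub h' with h'' | h''
      · exact q_notmem_inl _ h''
      · exact Bool.noConfusion (Sum.inr.inj h'')
    have hF'eq : F' = Sum.inl '' F₁ ∪ {Sum.inr false} := by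
      ext x
      cases x with
      | inl a =>
        simp only [Set.mem_union, Set.mem_image, Set.mem_singleton_iff]
        constructor
        · intro hx; exact Or.inl ⟨a, hx, rfl⟩
        · rintro (⟨a', ha', heq⟩ | heq)
          · exact (Sum.inl_injective heq) ▸ ha'
          · exact absurd heq (by simp)
      | inr b =>
        cases b with
        | false => simp [hp]
        | true => simp [hq]
    have hsub₁ : F₁ ⊆ F₀ := by
      intro a ha
      rcases hsub ha with h'' | h''
      · exact Sum.inl_injective.mem_set_image.1 h''
      · exact absurd h'' (by simp)
    have hfvs₁ : IsFVS r F₁ := fvs_p_iff.1 (hF'eq ▸ hF')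
    have : F₁ = F₀ := h.2 F₁ hsub₁ hfvs₁
    rw [hF'eq, this]
  · -- F' ⊆ inl '' F₀, contradiction
    have hq : Sum.inr true ∉ F' := fun h' => by
      rcases hsub h' with h'' | h''
      · exact q_notmem_inl _ h''
      · exact Bool.noConfusion (Sum.inr.inj h'')
    have huniv := univ_sub_of_fvs hF' hp hq
    exfalso
    apply minfvs_ne_univ hirr h
    ext t
    simp only [Set.mem_univ, iff_true]
    have : (Sum.inl t : V ⊕ Bool) ∈ F' := huniv (Set.mem_image_of_mem _ (Set.mem_univ t))
    rcases hsub this with h'' | h''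
    · exact Sum.inl_injective.mem_set_image.1 h''
    · exact absurd h'' (by simp)

lemma minfvs_q_of_minfvs [Nonempty V] (hirr : ∀ v : V, ¬ r v v) {F₀ : Set V}
    (h : IsMinimalFVS r F₀) :
    IsMinimalFVS (pqRel r) (Sum.inl '' F₀ ∪ {Sum.inr true}) := by
  refine ⟨fvs_q_iff.2 h.1, ?_⟩
  intro F' hsub hF'
  by_cases hq : Sum.inr true ∈ F'
  · set F₁ : Set V := Sum.inl ⁻¹' F' with hF₁
    have hp : Sum.inr false ∉ F' := fun h' => by
      rcases hsub h' with h'' | h''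
      · exact p_notmem_inl _ h''
      · exact Bool.noConfusion (Sum.inr.inj h'')
    have hF'eq : F' = Sum.inl '' F₁ ∪ {Sum.inr true} := by
      ext x
      cases x with
      | inl a =>
        simp only [Set.mem_union, Set.mem_image, Set.mem_singleton_iff]
        constructor
        · intro hx; exact Or.inl ⟨a, hx, rfl⟩
        · rintro (⟨a', ha', heq⟩ | heq)
          · exact (Sum.inl_injective heq) ▸ ha'
          · exact absurd heq (by simp)
      | inr b =>
        cases b with
        | false => simp [hp]
        | true => simp [hq]
    have hsub₁ : F₁ ⊆ F₀ := by
      intro a ha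
      rcases hsub ha with h'' | h''
      · exact Sum.inl_injective.mem_set_image.1 h''
      · exact absurd h'' (by simp)
    have hfvs₁ : IsFVS r F₁ := fvs_q_iff.1 (hF'eq ▸ hF')
    have : F₁ = F₀ := h.2 F₁ hsub₁ hfvs₁
    rw [hF'eq, this]
  · have hp : Sum.inr false ∉ F' := fun h' => by
      rcases hsub h' with h'' | h''
      · exact p_notmem_inl _ h''
      · exact Bool.noConfusion (Sum.inr.inj h'')
    have huniv := univ_sub_of_fvs hF' hp hq
    exfalso
    apply minfvs_ne_univ hirr h
    ext t
    simp only [Set.mem_univ, iff_true]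
    have : (Sum.inl t : V ⊕ Bool) ∈ F' := huniv (Set.mem_image_of_mem _ (Set.mem_univ t))
    rcases hsub this with h'' | h''
    · exact Sum.inl_injective.mem_set_image.1 h''
    · exact absurd h'' (by simp)

end PQ3
section PQ4

variable {V : Type*} {r : V → V → Prop}

lemma decomp_p {F : Set (V ⊕ Bool)} (hp : Sum.inr false ∈ F) (hq : Sum.inr true ∉ F) :
    F = Sum.inl '' (Sum.inl ⁻¹' F) ∪ {Sum.inr false} := by
  ext x
  cases x with
  | inl a =>
    simp only [Set.mem_union, Set.mem_image, Set.mem_preimage, Set.mem_singleton_iff]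
    constructor
    · intro hx; exact Or.inl ⟨a, hx, rfl⟩
    · rintro (⟨a', ha', heq⟩ | heq)
      · exact (Sum.inl_injective heq) ▸ ha'
      · exact absurd heq (by simp)
  | inr b => cases b with
    | false => simp [hp]
    | true => simp [hq]

lemma decomp_q {F : Set (V ⊕ Bool)} (hq : Sum.inr true ∈ F) (hp : Sum.inr false ∉ F) :
    F = Sum.inl '' (Sum.inl ⁻¹' F) ∪ {Sum.inr true} := by
  ext x
  cases x with
  | inl a =>
    simp only [Set.mem_union, Set.mem_image, Set.mem_preimage, Set.mem_singleton_iff]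
    constructor
    · intro hx; exact Or.inl ⟨a, hx, rfl⟩
    · rintro (⟨a', ha', heq⟩ | heq)
      · exact (Sum.inl_injective heq) ▸ ha'
      · exact absurd heq (by simp)
  | inr b => cases b with
    | false => simp [hp]
    | true => simp [hq]

lemma compl_both {F : Set (V ⊕ Bool)} (hp : Sum.inr false ∈ F) (hq : Sum.inr true ∈ F) :
    Fᶜ = Sum.inl '' (Sum.inl ⁻¹' F)ᶜ := by
  ext x
  cases x with
  | inl a =>
    simp only [Set.mem_compl_iff, Set.mem_image, Set.mem_preimage]
    constructor
    · intro hx; exact ⟨a, hx, rfl⟩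
    · rintro ⟨a', ha', heq⟩; exact (Sum.inl_injective heq) ▸ ha'
  | inr b => cases b with
    | false => simp [hp]
    | true => simp [hq]

lemma minfvs_classify [Nonempty V] (hirr : ∀ v : V, ¬ r v v) {F : Set (V ⊕ Bool)}
    (h : IsMinimalFVS (pqRel r) F) :
    F = Sum.inl '' (Set.univ : Set V) ∨
    (∃ F₀, IsMinimalFVS r F₀ ∧ F = Sum.inl '' F₀ ∪ {Sum.inr false}) ∨
    (∃ F₀, IsMinimalFVS r F₀ ∧ F = Sum.inl '' F₀ ∪ {Sum.inr true}) := by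
  by_cases hp : Sum.inr false ∈ F <;> by_cases hq : Sum.inr true ∈ F
  · -- both: impossible (not minimal)
    exfalso
    set F₁ : Set V := Sum.inl ⁻¹' F with hF₁
    have hcompl : Fᶜ = Sum.inl '' F₁ᶜ := compl_both hp hq
    have hfvs₁ : IsFVS r F₁ := acyclic_inl_iff.1 (hcompl ▸ h.1)
    have hsub : Sum.inl '' F₁ ∪ {Sum.inr false} ⊆ F := by
      rintro x (⟨a, ha, rfl⟩ | hx)
      · exact ha
      · exact hx ▸ hp
    have heq := h.2 _ hsub (fvs_p_iff.2 hfvs₁)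
    have : (Sum.inr true : V ⊕ Bool) ∈ Sum.inl '' F₁ ∪ {Sum.inr false} := heq ▸ hq
    rcases this with h' | h'
    · exact q_notmem_inl _ h'
    · exact Bool.noConfusion (Sum.inr.inj h')
  · -- p only
    right; left
    set F₁ : Set V := Sum.inl ⁻¹' F with hF₁
    have hFeq : F = Sum.inl '' F₁ ∪ {Sum.inr false} := decomp_p hp hq
    have hfvs₁ : IsFVS r F₁ := fvs_p_iff.1 (hFeq ▸ h.1)
    refine ⟨F₁, ⟨hfvs₁, ?_⟩, hFeq⟩
    intro F' hsub hF'
    have hsub' : Sum.inl '' F' ∪ {Sum.inr false} ⊆ F := by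
      rintro x (⟨a, ha, rfl⟩ | hx)
      · exact hsub ha
      · exact hx ▸ hp
    have heq := h.2 _ hsub' (fvs_p_iff.2 hF')
    exact inl_union_cancel (fun x h' => by simp at h') (heq.trans hFeq)
  · -- q only
    right; right
    set F₁ : Set V := Sum.inl ⁻¹' F with hF₁
    have hFeq : F = Sum.inl '' F₁ ∪ {Sum.inr true} := decomp_q hq hp
    have hfvs₁ : IsFVS r F₁ := fvs_q_iff.1 (hFeq ▸ h.1)
    refine ⟨F₁, ⟨hfvs₁, ?_⟩, hFeq⟩
    intro F' hsub hF'
    have hsub' : Sum.inl '' F' ∪ {Sum.inr true} ⊆ F := by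
      rintro x (⟨a, ha, rfl⟩ | hx)
      · exact hsub ha
      · exact hx ▸ hq
    have heq := h.2 _ hsub' (fvs_q_iff.2 hF')
    exact inl_union_cancel (fun x h' => by simp at h') (heq.trans hFeq)
  · -- neither
    left
    exact (h.2 _ (univ_sub_of_fvs h.1 hp hq) minfvs_univ.1).symm

lemma pq_strong [Nonempty V] : IsStrong (pqRel r) := by
  intro u v
  have hq : ∀ x : V ⊕ Bool, Relation.ReflTransGen (pqRel r) x (Sum.inr true) := by
    intro x
    match x with
    | Sum.inl t => exact .single trivial
    | Sum.inr true => exact .refl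
    | Sum.inr false =>
      obtain ⟨t⟩ := ‹Nonempty V›
      exact .tail (.single (show pqRel r (Sum.inr false) (Sum.inl t) from trivial))
        (show pqRel r (Sum.inl t) (Sum.inr true) from trivial)
  have hq' : ∀ y : V ⊕ Bool, Relation.ReflTransGen (pqRel r) (Sum.inr true) y := by
    intro y
    match y with
    | Sum.inr true => exact .refl
    | Sum.inr false => exact .single trivial
    | Sum.inl t =>
      exact .tail (.single (show pqRel r (Sum.inr true) (Sum.inr false) from trivial))
        (show pqRel r (Sum.inr false) (Sum.inl t) from trivial)
  exact (hq u).trans (hq' v)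

end PQ4
/-- If `T'` is a strong tournament, then `pq(T')` is strong and has exactly
`2 f(T') + 1` minimal feedback vertex sets. -/
theorem stmt11 {V : Type*} [Fintype V] [Nonempty V] (r : V → V → Prop)
    (hT : IsTournament r) (hS : IsStrong r) :
    IsStrong (pqRel r) ∧
    {F : Set (V ⊕ Bool) | IsMinimalFVS (pqRel r) F}.ncard
      = 2 * {F : Set V | IsMinimalFVS r F}.ncard + 1 := by
  obtain ⟨hirr, -⟩ := hT
  refine ⟨pq_strong, ?_⟩
  have hset : {F : Set (V ⊕ Bool) | IsMinimalFVS (pqRel r) F}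
      = insert (Sum.inl '' (Set.univ : Set V))
          (((fun F₀ => Sum.inl '' F₀ ∪ {Sum.inr false}) '' {F : Set V | IsMinimalFVS r F}) ∪
           ((fun F₀ => Sum.inl '' F₀ ∪ {Sum.inr true}) '' {F : Set V | IsMinimalFVS r F})) := by
    ext F
    simp only [Set.mem_setOf_eq, Set.mem_insert_iff, Set.mem_union, Set.mem_image]
    constructor
    · intro h
      rcases minfvs_classify hirr h with h | ⟨F₀, h₀, rfl⟩ | ⟨F₀, h₀, rfl⟩
      · exact Or.inl h
      · exact Or.inr (Or.inl ⟨F₀, h₀, rfl⟩)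
      · exact Or.inr (Or.inr ⟨F₀, h₀, rfl⟩)
    · rintro (rfl | ⟨F₀, h₀, rfl⟩ | ⟨F₀, h₀, rfl⟩)
      · exact minfvs_univ
      · exact minfvs_p_of_minfvs hirr h₀
      · exact minfvs_q_of_minfvs hirr h₀
  have hinj1 : Function.Injective (fun F₀ : Set V => Sum.inl '' F₀ ∪ {Sum.inr false}) := by
    intro A B hAB
    exact inl_union_cancel (fun x h' => by simp at h') hAB
  have hinj2 : Function.Injective (fun F₀ : Set V => Sum.inl '' F₀ ∪ {Sum.inr true}) := by
    intro A B hAB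
    exact inl_union_cancel (fun x h' => by simp at h') hAB
  have hnm : Sum.inl '' (Set.univ : Set V) ∉
      (((fun F₀ => Sum.inl '' F₀ ∪ {Sum.inr false}) '' {F : Set V | IsMinimalFVS r F}) ∪
       ((fun F₀ => Sum.inl '' F₀ ∪ {Sum.inr true}) '' {F : Set V | IsMinimalFVS r F})) := by
    rintro (⟨F₀, -, heq⟩ | ⟨F₀, -, heq⟩)
    · have : (Sum.inr false : V ⊕ Bool) ∈ Sum.inl '' (Set.univ : Set V) :=
        heq ▸ Set.mem_union_right _ rfl
      exact p_notmem_inl _ this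
    · have : (Sum.inr true : V ⊕ Bool) ∈ Sum.inl '' (Set.univ : Set V) :=
        heq ▸ Set.mem_union_right _ rfl
      exact q_notmem_inl _ this
  have hdisj : Disjoint
      ((fun F₀ => Sum.inl '' F₀ ∪ {Sum.inr false}) '' {F : Set V | IsMinimalFVS r F})
      ((fun F₀ => Sum.inl '' F₀ ∪ {Sum.inr true}) '' {F : Set V | IsMinimalFVS r F}) := by
    rw [Set.disjoint_left]
    rintro F ⟨A, -, rfl⟩ ⟨B, -, heq⟩
    have heq' : Sum.inl '' B ∪ {Sum.inr true} = Sum.inl '' A ∪ {Sum.inr false} := heq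
    have : (Sum.inr true : V ⊕ Bool) ∈ Sum.inl '' A ∪ {Sum.inr false} :=
      heq' ▸ (Set.mem_union_right _ rfl : (Sum.inr true : V ⊕ Bool) ∈ Sum.inl '' B ∪ {Sum.inr true})
    rcases this with h' | h'
    · exact q_notmem_inl _ h'
    · exact Bool.noConfusion (Sum.inr.inj h')
  rw [hset, Set.ncard_insert_of_notMem hnm (Set.toFinite _),
    Set.ncard_union_eq hdisj (Set.toFinite _) (Set.toFinite _),
    Set.ncard_image_of_injective _ hinj1, Set.ncard_image_of_injective _ hinj2]
  ring
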